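/- Let n ≥ 2 and let z₀, …, zₙ be positive real numbers satisfying the simplex inequalities 2·z_k < z₀ + ⋯ + zₙ for every k with 0 ≤ k ≤ n. Then there exist vectors 𝐳₀, …, 𝐳ₙ in ℝⁿ whose ℝ-linear span is all of ℝⁿ, such that 𝐳₀ + ⋯ + 𝐳ₙ = 0 and ‖𝐳_k‖ = z_k for every k. -/

import Mathlib

open scoped RealInnerProductSpace BigOperators

open Module Submodule Set Finset




section helpers

variable {F : Type} [NormedAddCommGroup F] [InnerProductSpace ℝ F]

omit [InnerProductSpace ℝ F] in
lemma norm_eq_of_sq_eq {a b : F} (h : ‖a‖ ^ 2 = ‖b‖ ^ 2) : ‖a‖ = ‖b‖ := by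
  have := congrArg Real.sqrt h
  rwa [Real.sqrt_sq (norm_nonneg _), Real.sqrt_sq (norm_nonneg _)] at this

lemma transport {d m : ℕ} (hd : 0 < d) (hF : finrank ℝ F = d)
    (v : Fin m → EuclideanSpace ℝ (Fin d))
    (hspan : span ℝ (range v) = ⊤) (hsum : (∑ i, v i) = 0) :
    ∃ Z : Fin m → F, span ℝ (range Z) = ⊤ ∧ (∑ i, Z i) = 0 ∧ ∀ k, ‖Z k‖ = ‖v k‖ := by
  haveI : FiniteDimensional ℝ F := FiniteDimensional.of_finrank_pos (by rw [hF]; exact hd)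
  let L : EuclideanSpace ℝ (Fin d) ≃ₗᵢ[ℝ] F :=
    ((stdOrthonormalBasis ℝ F).reindex (finCongr hF)).repr.symm
  refine ⟨fun k => L (v k), ?_, ?_, fun k => L.norm_map (v k)⟩
  · have h1 : range (fun k => L (v k)) = ⇑(L.toLinearEquiv : EuclideanSpace ℝ (Fin d) →ₗ[ℝ] F) '' (range v) := by
      rw [← Set.range_comp]; rfl
    rw [h1, ← Submodule.map_span, hspan, Submodule.map_top]
    exact LinearEquiv.range _
  · have : (∑ i, L (v i)) = L (∑ i, v i) := (map_sum L.toLinearEquiv.toLinearMap v Finset.univ).symm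
    rw [this, hsum, map_zero]

lemma bend (B s w : F) (hw : ‖w‖ = 1) (hwB : ⟪w, B⟫ = 0) (hws : ⟪w, s⟫ = 0)
    (hB : B ∉ (ℝ ∙ s)) :
    ∃ (B' : F) (ρ : ℝ), ρ ≠ 0 ∧ ‖B'‖ = ‖B‖ ∧ ‖s - B'‖ = ‖s - B‖ ∧ B' - ρ • w ∈ (ℝ ∙ s) := by
  set t : ℝ := ⟪s, B⟫ / ⟪s, s⟫ with ht
  set mv : F := t • s with hmv
  set p : F := B - mv with hp
  have hBmp : B = mv + p := by rw [hp]; abel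
  have hsp : ⟪s, p⟫ = 0 := by
    by_cases hs : s = 0
    · simp [hp, hs]
    · have h0 : ⟪s, s⟫ ≠ (0:ℝ) := inner_self_ne_zero.mpr hs
      rw [hp, inner_sub_right, hmv, real_inner_smul_right, ht]
      field_simp
      ring
  have hpne : p ≠ 0 := by
    intro h
    apply hB
    have : B = t • s := by rw [← sub_eq_zero]; exact h
    exact Submodule.mem_span_singleton.mpr ⟨t, this.symm⟩
  have hmp : ⟪mv, p⟫ = 0 := by rw [hmv, real_inner_smul_left, hsp, mul_zero]
  have hmw : ⟪mv, w⟫ = 0 := by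
    rw [hmv, real_inner_smul_left, real_inner_comm, hws, mul_zero]
  have hsmw : ⟪s - mv, w⟫ = 0 := by
    rw [inner_sub_left, hmw, real_inner_comm, hws, sub_zero]
  have hsmp : ⟪s - mv, p⟫ = 0 := by rw [inner_sub_left, hsp, hmp, sub_zero]
  refine ⟨mv + ‖p‖ • w, ‖p‖, norm_ne_zero_iff.mpr hpne, ?_, ?_, ?_⟩
  · refine norm_eq_of_sq_eq ?_
    have e1 : ‖mv + ‖p‖ • w‖ ^ 2 = ‖mv‖ ^ 2 + ‖p‖ ^ 2 := by
      rw [norm_add_sq_real, real_inner_smul_right, hmw, norm_smul ‖p‖ w, hw, Real.norm_eq_abs,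
        abs_norm]
      ring
    have e2 : ‖B‖ ^ 2 = ‖mv‖ ^ 2 + ‖p‖ ^ 2 := by
      rw [hBmp, norm_add_sq_real, hmp]; ring
    rw [e1, e2]
  · refine norm_eq_of_sq_eq ?_
    have e3 : ‖s - (mv + ‖p‖ • w)‖ ^ 2 = ‖s - mv‖ ^ 2 + ‖p‖ ^ 2 := by
      have h : s - (mv + ‖p‖ • w) = (s - mv) - ‖p‖ • w := by abel
      rw [h, norm_sub_sq_real, real_inner_smul_right, hsmw, norm_smul ‖p‖ w, hw, Real.norm_eq_abs,
        abs_norm]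
      ring
    have e4 : ‖s - B‖ ^ 2 = ‖s - mv‖ ^ 2 + ‖p‖ ^ 2 := by
      have h : s - B = (s - mv) - p := by rw [hBmp]; abel
      rw [h, norm_sub_sq_real, hsmp]; ring
    rw [e3, e4]
  · have h : mv + ‖p‖ • w - ‖p‖ • w = mv := by abel
    rw [h, hmv]
    exact Submodule.mem_span_singleton.mpr ⟨t, rfl⟩

end helpers

noncomputable def ev {d : ℕ} (x : Fin d → ℝ) : EuclideanSpace ℝ (Fin d) :=
  (WithLp.equiv 2 (Fin d → ℝ)).symm x

lemma ev_apply {d : ℕ} (x : Fin d → ℝ) (i : Fin d) : ev x i = x i := rfl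

lemma euclidean_span_top {d : ℕ} (K : Submodule ℝ (EuclideanSpace ℝ (Fin d)))
    (h : ∀ i : Fin d, EuclideanSpace.single i (1:ℝ) ∈ K) : K = ⊤ := by
  rw [← top_le_iff, ← (EuclideanSpace.basisFun (Fin d) ℝ).toBasis.span_eq]
  rw [Submodule.span_le]
  rintro x ⟨i, rfl⟩
  simpa [EuclideanSpace.basisFun_apply] using h i

lemma triangle_euclidean (z : Fin 3 → ℝ) (hpos : ∀ k, 0 < z k)
    (hineq : ∀ k, 2 * z k < ∑ i, z i) :
    ∃ v : Fin 3 → EuclideanSpace ℝ (Fin 2),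
      span ℝ (range v) = ⊤ ∧ (∑ i, v i) = 0 ∧ ∀ k, ‖v k‖ = z k := by
  have hS : ∑ i, z i = z 0 + z 1 + z 2 := by
    rw [Fin.sum_univ_three]
  have h0 := hineq 0; have h1 := hineq 1; have h2 := hineq 2
  rw [hS] at h0 h1 h2
  have hz0 := hpos 0; have hz1 := hpos 1; have hz2 := hpos 2
  set x : ℝ := (z 2 ^ 2 - z 1 ^ 2 - z 0 ^ 2) / (2 * z 0) with hx
  have hz0' : (2 * z 0) ≠ 0 := by positivity
  have h2x : 2 * z 0 * x = z 2 ^ 2 - z 1 ^ 2 - z 0 ^ 2 := by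
    rw [hx]; field_simp
  have hx2 : x ^ 2 < z 1 ^ 2 := by
    have p1 : (0:ℝ) < z 0 + z 1 - z 2 := by linarith
    have p2 : (0:ℝ) < z 0 - z 1 + z 2 := by linarith
    have p3 : (0:ℝ) < -z 0 + z 1 + z 2 := by linarith
    have pS : (0:ℝ) < z 0 + z 1 + z 2 := by linarith
    have key : (z 2 ^ 2 - z 1 ^ 2 - z 0 ^ 2) ^ 2 < (2 * z 0 * z 1) ^ 2 := by
      nlinarith [mul_pos (mul_pos p1 pS) (mul_pos p3 p2)]
    nlinarith [sq_nonneg x, sq_nonneg (z 0), mul_pos hz0 hz0]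
  set y : ℝ := Real.sqrt (z 1 ^ 2 - x ^ 2) with hy
  have hy2 : y ^ 2 = z 1 ^ 2 - x ^ 2 := Real.sq_sqrt (by linarith)
  have hypos : 0 < y := Real.sqrt_pos.mpr (by linarith)
  set v : Fin 3 → EuclideanSpace ℝ (Fin 2) :=
    ![ev ![z 0, 0], ev ![x, y], ev ![-(z 0 + x), -y]] with hv
  have happ : ∀ (a b : ℝ), (ev ![a, b]) 0 = a ∧ (ev ![a, b]) 1 = b := fun a b => ⟨rfl, rfl⟩
  refine ⟨v, ?_, ?_, ?_⟩
  · apply euclidean_span_top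
    have hm0 : EuclideanSpace.single 0 (1:ℝ) = (z 0)⁻¹ • v 0 := by
      refine PiLp.ext fun i => ?_
      fin_cases i <;>
        simp [hv, ev, EuclideanSpace.single_apply, PiLp.smul_apply] <;> field_simp
    have hm1 : EuclideanSpace.single 1 (1:ℝ) = y⁻¹ • (v 1 - (x / z 0) • v 0) := by
      refine PiLp.ext fun i => ?_
      fin_cases i <;>
        simp [hv, ev, EuclideanSpace.single_apply, PiLp.smul_apply, PiLp.sub_apply] <;>
        field_simp <;> simp
    have mem0 : EuclideanSpace.single (0 : Fin 2) (1:ℝ) ∈ span ℝ (range v) := by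
      rw [hm0]
      exact smul_mem _ _ (subset_span (mem_range_self 0))
    have mem1 : EuclideanSpace.single (1 : Fin 2) (1:ℝ) ∈ span ℝ (range v) := by
      rw [hm1]
      exact smul_mem _ _ (sub_mem (subset_span (mem_range_self 1))
        (smul_mem _ _ (subset_span (mem_range_self 0))))
    intro i
    fin_cases i
    · exact mem0
    · exact mem1
  · refine PiLp.ext fun i => ?_
    rw [Fin.sum_univ_three]
    fin_cases i <;> simp [hv, ev, PiLp.add_apply] <;> ring
  · have hnorm : ∀ (a b : ℝ), ‖ev ![a, b]‖ = Real.sqrt (a ^ 2 + b ^ 2) := by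
      intro a b
      rw [EuclideanSpace.norm_eq, Fin.sum_univ_two]
      simp [ev, Real.norm_eq_abs, sq_abs]
    intro k
    fin_cases k
    · show ‖ev ![z 0, 0]‖ = z 0
      rw [hnorm]
      rw [show z 0 ^ 2 + 0 ^ 2 = z 0 ^ 2 by ring, Real.sqrt_sq hz0.le]
    · show ‖ev ![x, y]‖ = z 1
      rw [hnorm, show x ^ 2 + y ^ 2 = z 1 ^ 2 by rw [hy2]; ring, Real.sqrt_sq hz1.le]
    · show ‖ev ![-(z 0 + x), -y]‖ = z 2
      rw [hnorm, show (-(z 0 + x)) ^ 2 + (-y) ^ 2 = z 2 ^ 2 by rw [neg_pow, neg_pow]; nlinarith [hy2, h2x],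
        Real.sqrt_sq hz2.le]

lemma tetra_euclidean (c : ℝ) (hc : 0 < c) :
    ∃ v : Fin 4 → EuclideanSpace ℝ (Fin 3),
      span ℝ (range v) = ⊤ ∧ (∑ i, v i) = 0 ∧ ∀ k, ‖v k‖ = c := by
  set a : ℝ := c / Real.sqrt 3 with ha
  have h3 : (0:ℝ) < Real.sqrt 3 := Real.sqrt_pos.mpr (by norm_num)
  have hapos : 0 < a := div_pos hc h3
  have ha2 : 3 * a ^ 2 = c ^ 2 := by
    rw [ha, div_pow, Real.sq_sqrt (by norm_num : (3:ℝ) ≥ 0)]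
    field_simp
  set v : Fin 4 → EuclideanSpace ℝ (Fin 3) :=
    ![ev ![a, a, a], ev ![a, -a, -a], ev ![-a, a, -a], ev ![-a, -a, a]] with hv
  refine ⟨v, ?_, ?_, ?_⟩
  · apply euclidean_span_top
    have h2a : (2 * a) ≠ 0 := by positivity
    have hm0 : EuclideanSpace.single (0 : Fin 3) (1:ℝ) = (2*a)⁻¹ • (v 0 + v 1) := by
      refine PiLp.ext fun i => ?_
      fin_cases i <;>
        (simp [hv, ev, EuclideanSpace.single_apply, PiLp.smul_apply, PiLp.add_apply]; try field_simp; try ring)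
    have hm1 : EuclideanSpace.single (1 : Fin 3) (1:ℝ) = (2*a)⁻¹ • (v 0 + v 2) := by
      refine PiLp.ext fun i => ?_
      fin_cases i <;>
        (simp [hv, ev, EuclideanSpace.single_apply, PiLp.smul_apply, PiLp.add_apply]; try field_simp; try ring)
    have hm2 : EuclideanSpace.single (2 : Fin 3) (1:ℝ) = (2*a)⁻¹ • (v 0 + v 3) := by
      refine PiLp.ext fun i => ?_
      fin_cases i <;>
        (simp [hv, ev, EuclideanSpace.single_apply, PiLp.smul_apply, PiLp.add_apply]; try field_simp; try ring)
    have sp : ∀ k : Fin 4, v k ∈ span ℝ (range v) := fun k => subset_span (mem_range_self k)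
    have mem0 : EuclideanSpace.single (0 : Fin 3) (1:ℝ) ∈ span ℝ (range v) := by
      rw [hm0]; exact smul_mem _ _ (add_mem (sp 0) (sp 1))
    have mem1 : EuclideanSpace.single (1 : Fin 3) (1:ℝ) ∈ span ℝ (range v) := by
      rw [hm1]; exact smul_mem _ _ (add_mem (sp 0) (sp 2))
    have mem2 : EuclideanSpace.single (2 : Fin 3) (1:ℝ) ∈ span ℝ (range v) := by
      rw [hm2]; exact smul_mem _ _ (add_mem (sp 0) (sp 3))
    intro i
    fin_cases i
    · exact mem0
    · exact mem1
    · exact mem2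
  · refine PiLp.ext fun i => ?_
    rw [Fin.sum_univ_four]
    fin_cases i <;> (simp [hv, ev, PiLp.add_apply]; try ring)
  · have hnorm : ∀ (p q r : ℝ), ‖ev ![p, q, r]‖ = Real.sqrt (p ^ 2 + q ^ 2 + r ^ 2) := by
      intro p q r
      rw [EuclideanSpace.norm_eq, Fin.sum_univ_three]
      simp [ev, Real.norm_eq_abs, sq_abs]
    have hsq : ∀ (p q r : ℝ), p ^ 2 = a ^ 2 → q ^ 2 = a ^ 2 → r ^ 2 = a ^ 2 →
        Real.sqrt (p ^ 2 + q ^ 2 + r ^ 2) = c := by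
      intro p q r hp hq hr
      rw [hp, hq, hr, show a ^ 2 + a ^ 2 + a ^ 2 = c ^ 2 by linarith [ha2],
        Real.sqrt_sq hc.le]
    intro k
    fin_cases k
    · show ‖ev ![a, a, a]‖ = c
      rw [hnorm]; exact hsq _ _ _ rfl rfl rfl
    · show ‖ev ![a, -a, -a]‖ = c
      rw [hnorm]; exact hsq _ _ _ rfl (by ring) (by ring)
    · show ‖ev ![-a, a, -a]‖ = c
      rw [hnorm]; exact hsq _ _ _ (by ring) rfl (by ring)
    · show ‖ev ![-a, -a, a]‖ = c
      rw [hnorm]; exact hsq _ _ _ (by ring) (by ring) rfl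

lemma step (n : ℕ) (hn : 2 ≤ n) {F : Type} [NormedAddCommGroup F] [InnerProductSpace ℝ F]
    (hF : finrank ℝ F = n + 1)
    (IH : ∀ W : Submodule ℝ F, finrank ℝ W = n →
      ∀ z' : Fin (n + 1) → ℝ, (∀ k, 0 < z' k) → (∀ k, 2 * z' k < ∑ i, z' i) →
      ∃ V : Fin (n + 1) → W, span ℝ (range V) = ⊤ ∧ (∑ i, V i) = 0 ∧ ∀ k, ‖V k‖ = z' k)
    (z : Fin (n + 2) → ℝ) (hpos : ∀ k, 0 < z k) (hineq : ∀ k, 2 * z k < ∑ i, z i)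
    (i₀ j₀ : Fin (n + 2)) (hij : i₀ ≠ j₀)
    (hpair : 2 * (z i₀ + z j₀) < ∑ i, z i) :
    ∃ Z : Fin (n + 2) → F, span ℝ (range Z) = ⊤ ∧ (∑ i, Z i) = 0 ∧ ∀ k, ‖Z k‖ = z k := by
  haveI : FiniteDimensional ℝ F := FiniteDimensional.of_finrank_pos (by omega)
  -- the permutation putting i₀ at the last position and j₀ just before it
  set lastF : Fin (n + 2) := Fin.last (n + 1) with hlastF
  set nF : Fin (n + 2) := (Fin.last n).castSucc with hnF
  have hne : nF ≠ lastF := ne_of_lt (Fin.castSucc_lt_last _)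
  set j₁ : Fin (n + 2) := Equiv.swap lastF i₀ j₀ with hj₁
  have hj₁last : j₁ ≠ lastF := by
    intro h
    apply hij
    have := congrArg (Equiv.swap lastF i₀) h
    rw [hj₁, Equiv.swap_apply_self, Equiv.swap_apply_left] at this
    exact this.symm
  set σ : Equiv.Perm (Fin (n + 2)) := (Equiv.swap nF j₁).trans (Equiv.swap lastF i₀) with hσ
  have hσlast : σ lastF = i₀ := by
    rw [hσ, Equiv.trans_apply, Equiv.swap_apply_of_ne_of_ne hne.symm (Ne.symm hj₁last),
      Equiv.swap_apply_left]
  have hσn : σ nF = j₀ := by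
    rw [hσ, Equiv.trans_apply, Equiv.swap_apply_left, hj₁, Equiv.swap_apply_self]
  set y : Fin (n + 2) → ℝ := fun k => z (σ k) with hy
  have hsumy : (∑ i, y i) = ∑ i, z i := Equiv.sum_comp σ z
  have hypos : ∀ k, 0 < y k := fun k => hpos (σ k)
  -- the merged length vector
  set z' : Fin (n + 1) → ℝ :=
    fun k => if k = Fin.last n then z j₀ + z i₀ else y k.castSucc with hz'
  have hz'last : z' (Fin.last n) = z j₀ + z i₀ := by simp [hz']
  have hz'ne : ∀ k : Fin (n+1), k ≠ Fin.last n → z' k = y k.castSucc := by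
    intro k hk; simp [hz', hk]
  have hz'cast : ∀ k : Fin n, z' k.castSucc = y k.castSucc.castSucc :=
    fun k => hz'ne _ (ne_of_lt (Fin.castSucc_lt_last k))
  have hynF : y nF = z j₀ := by simp only [hy]; rw [hσn]
  have hylast : y lastF = z i₀ := by simp only [hy]; rw [hσlast]
  have hz'pos : ∀ k, 0 < z' k := by
    intro k
    by_cases hk : k = Fin.last n
    · subst hk; rw [hz'last]; have := hpos i₀; have := hpos j₀; linarith
    · rw [hz'ne k hk]; exact hypos _
  have hsumy' : (∑ i, y i) = (∑ k : Fin n, y k.castSucc.castSucc) + z j₀ + z i₀ := by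
    rw [Fin.sum_univ_castSucc (f := y), Fin.sum_univ_castSucc (f := fun k : Fin (n+1) => y k.castSucc)]
    rw [← hnF, ← hlastF, hynF, hylast]
  have hz'sum : (∑ k, z' k) = ∑ i, z i := by
    rw [Fin.sum_univ_castSucc (f := z'), hz'last,
      Finset.sum_congr rfl (fun k _ => hz'cast k), ← hsumy, hsumy']
    ring
  have hz'ineq : ∀ k, 2 * z' k < ∑ i, z' i := by
    intro k
    rw [hz'sum]
    by_cases hk : k = Fin.last n
    · subst hk; rw [hz'last]; linarith [hpair]
    · rw [hz'ne k hk]; exact hineq (σ _)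
  -- a unit vector and its orthogonal complement
  have hnt : Nontrivial F := by
    apply nontrivial_of_finrank_pos (R := ℝ) (M := F)
    omega
  obtain ⟨v0, hv0⟩ := exists_ne (0 : F)
  set w : F := ‖v0‖⁻¹ • v0 with hwdef
  have hw : ‖w‖ = 1 := norm_smul_inv_norm hv0
  have hwne : w ≠ 0 := by intro h; rw [h, norm_zero] at hw; norm_num at hw
  set W : Submodule ℝ F := (ℝ ∙ w)ᗮ with hW
  have hWrank : finrank ℝ W = n := by
    apply Submodule.finrank_add_finrank_orthogonal' (K := ℝ ∙ w)
    rw [finrank_span_singleton hwne, hF]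
    omega
  have hworth : ∀ x : F, x ∈ W → ⟪w, x⟫ = 0 := by
    intro x hx
    exact (Submodule.mem_orthogonal (ℝ ∙ w) x).mp hx w (Submodule.mem_span_singleton_self w)
  obtain ⟨V, hVspan, hVsum, hVnorm⟩ := IH W hWrank z' hz'pos hz'ineq
  set Vt : Fin (n + 1) → F := fun k => (V k : F) with hVt
  have hVtW : ∀ k, Vt k ∈ W := fun k => (V k).2
  have hVtnorm : ∀ k, ‖Vt k‖ = z' k := fun k => by
    rw [hVt]; rw [← Submodule.coe_norm]; exact hVnorm k
  have hVtsum : (∑ i, Vt i) = 0 := by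
    have h := congrArg (W.subtype) hVsum
    rw [map_sum, map_zero] at h
    simpa [hVt, Submodule.coe_subtype] using h
  have hWspan : span ℝ (range Vt) = W := by
    have h1 : range Vt = W.subtype '' (range V) := by
      rw [← Set.range_comp]; rfl
    rw [h1, ← Submodule.map_span, hVspan, Submodule.map_top, Submodule.range_subtype]
  -- choose the index j to bend with
  set lv : Fin (n + 1) := Fin.last n with hlv
  have hVlvne : Vt lv ≠ 0 := by
    intro h
    have h2 := hVtnorm lv
    rw [h, norm_zero, hlv, hz'last] at h2
    have := hpos i₀; have := hpos j₀; linarith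
  have hexj : ∃ j : Fin (n + 1), Vt j ∉ (ℝ ∙ (Vt lv)) := by
    by_contra hcon
    push_neg at hcon
    have hle : W ≤ (ℝ ∙ (Vt lv)) := by
      rw [← hWspan, Submodule.span_le]
      rintro x ⟨k, rfl⟩
      exact hcon k
    have h1 : finrank ℝ W ≤ finrank ℝ (ℝ ∙ (Vt lv)) := Submodule.finrank_mono hle
    rw [hWrank, finrank_span_singleton hVlvne] at h1
    omega
  obtain ⟨j, hj⟩ := hexj
  have hjlv : j ≠ lv := by
    intro h
    rw [h] at hj
    exact hj (Submodule.mem_span_singleton_self _)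
  -- split the merged vector
  set D : ℝ := z j₀ + z i₀ with hD
  have hDpos : 0 < D := by have := hpos i₀; have := hpos j₀; linarith
  set cB : ℝ := z i₀ / D with hcB
  have hcBpos : 0 < cB := div_pos (hpos i₀) hDpos
  have hcB1 : cB < 1 := by
    rw [hcB, div_lt_one hDpos, hD]
    linarith [hpos j₀]
  set B : F := cB • Vt lv with hB
  set A : F := Vt lv - B with hA
  have hVtlvnorm : ‖Vt lv‖ = D := by rw [hVtnorm lv, hlv, hz'last, hD]
  have hBnorm : ‖B‖ = z i₀ := by
    rw [hB, norm_smul, Real.norm_eq_abs, abs_of_pos hcBpos, hVtlvnorm, hcB]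
    field_simp
  have hAeq : A = (1 - cB) • Vt lv := by rw [hA, hB, sub_smul, one_smul]
  have hAnorm : ‖A‖ = z j₀ := by
    rw [hAeq, norm_smul, Real.norm_eq_abs, abs_of_pos (by linarith), hVtlvnorm, hcB]
    field_simp
    ring
  set s : F := B + Vt j with hs
  have hsW : s ∈ W := add_mem (smul_mem _ _ (hVtW lv)) (hVtW j)
  have hBnotin : B ∉ (ℝ ∙ s) := by
    intro hmem
    obtain ⟨t, ht⟩ := Submodule.mem_span_singleton.mp hmem
    by_cases htz : t = 0
    · rw [htz, zero_smul] at ht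
      apply hVlvne
      have h1 : cB • Vt lv = 0 := by rw [← hB, ← ht]
      rcases smul_eq_zero.mp h1 with h | h
      · exact absurd h (ne_of_gt hcBpos)
      · exact h
    · apply hj
      have h1 : t • B + t • Vt j = B := by
        rw [← smul_add, ← hs, ht]
      have h2 : t • Vt j = (1 - t) • B := by
        rw [sub_smul, one_smul]
        exact eq_sub_of_add_eq' h1
      have h3 : Vt j = (t⁻¹ * ((1 - t) * cB)) • Vt lv := by
        rw [mul_smul, mul_smul, ← hB]
        rw [← h2, inv_smul_smul₀ htz]
      exact Submodule.mem_span_singleton.mpr ⟨_, h3.symm⟩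
  have hws : ⟪w, s⟫ = 0 := hworth s hsW
  obtain ⟨B', ρ, hρ, hB'norm, hsB'norm, hB'mem⟩ := bend B s w hw (hworth B (smul_mem _ _ (hVtW lv))) hws hBnotin
  -- assemble the new family
  set U₀ : Fin (n + 1) → F :=
    Function.update (Function.update Vt lv A) j (s - B') with hU₀
  set U : Fin (n + 2) → F := Fin.snoc U₀ B' with hU
  have hU₀j : U₀ j = s - B' := by rw [hU₀]; simp
  have hU₀lv : U₀ lv = A := by
    rw [hU₀, Function.update_of_ne (Ne.symm hjlv), Function.update_self]
  have hU₀other : ∀ k, k ≠ j → k ≠ lv → U₀ k = Vt k := by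
    intro k h1 h2
    rw [hU₀, Function.update_of_ne h1, Function.update_of_ne h2]
  have hUcast : ∀ k : Fin (n + 1), U (k.castSucc) = U₀ k := by
    intro k; rw [hU]; exact Fin.snoc_castSucc _ _ k
  have hUlast : U lastF = B' := by rw [hU, hlastF]; exact Fin.snoc_last _ _
  refine ⟨fun k => U (σ.symm k), ?_, ?_, ?_⟩
  · -- span
    have hrange : (Set.range fun k => U (σ.symm k)) = Set.range U :=
      Function.Surjective.range_comp (Equiv.surjective σ.symm) U
    rw [hrange]
    have hUmem : ∀ k : Fin (n+1), U₀ k ∈ span ℝ (Set.range U) := fun k => by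
      rw [← hUcast k]; exact subset_span (mem_range_self _)
    have hB'smem : B' ∈ span ℝ (Set.range U) := by
      rw [← hUlast]; exact subset_span (mem_range_self _)
    have hVtlvmem : Vt lv ∈ span ℝ (Set.range U) := by
      have h1 : Vt lv = (1 - cB)⁻¹ • A := by
        rw [hAeq, smul_smul, inv_mul_cancel₀ (by linarith), one_smul]
      rw [h1, ← hU₀lv]
      exact smul_mem _ _ (hUmem lv)
    have hVtmem : ∀ k, k ≠ j → Vt k ∈ span ℝ (Set.range U) := by
      intro k hk
      by_cases hk2 : k = lv
      · rw [hk2]; exact hVtlvmem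
      · rw [← hU₀other k hk hk2]; exact hUmem k
    have hVtjmem : Vt j ∈ span ℝ (Set.range U) := by
      have hsum2 : Vt j + ∑ k ∈ Finset.univ.erase j, Vt k = 0 := by
        rw [Finset.add_sum_erase _ Vt (Finset.mem_univ j)]; exact hVtsum
      have h1 : Vt j = - ∑ k ∈ Finset.univ.erase j, Vt k :=
        eq_neg_of_add_eq_zero_left hsum2
      rw [h1]
      exact neg_mem (sum_mem (fun k hk => hVtmem k (Finset.mem_erase.mp hk).1))
    have hWle : W ≤ span ℝ (Set.range U) := by
      rw [← hWspan, Submodule.span_le]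
      rintro x ⟨k, rfl⟩
      by_cases hk : k = j
      · rw [hk]; exact hVtjmem
      · exact hVtmem k hk
    have hmW : B' - ρ • w ∈ W :=
      ((Submodule.span_singleton_le_iff_mem s W).mpr hsW) hB'mem
    have hρw : ρ • w ∈ span ℝ (Set.range U) := by
      have h1 : ρ • w = B' - (B' - ρ • w) := by abel
      rw [h1]
      exact sub_mem hB'smem (hWle hmW)
    have hwmem : w ∈ span ℝ (Set.range U) := by
      have h1 : w = ρ⁻¹ • (ρ • w) := by rw [smul_smul, inv_mul_cancel₀ hρ, one_smul]
      rw [h1]; exact smul_mem _ _ hρw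
    rw [← top_le_iff]
    haveI : CompleteSpace (ℝ ∙ w) := FiniteDimensional.complete ℝ _
    have htop : (ℝ ∙ w) ⊔ W = ⊤ := by
      rw [hW]; exact Submodule.sup_orthogonal_of_hasOrthogonalProjection
    rw [← htop]
    exact sup_le ((Submodule.span_singleton_le_iff_mem _ _).mpr hwmem) hWle
  · -- sum
    rw [Equiv.sum_comp σ.symm U, Fin.sum_univ_castSucc (f := U), ← hlastF,
      Finset.sum_congr rfl (fun k _ => hUcast k), hUlast]
    have hlvmem : lv ∈ Finset.univ.erase j :=
      Finset.mem_erase.mpr ⟨Ne.symm hjlv, Finset.mem_univ lv⟩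
    have e1 : ∑ k, U₀ k = (s - B') + (A + ∑ k ∈ (Finset.univ.erase j).erase lv, Vt k) := by
      rw [hU₀, Finset.sum_update_of_mem (Finset.mem_univ j), ← Finset.erase_eq]
      congr 1
      rw [Finset.sum_update_of_mem hlvmem, ← Finset.erase_eq]
    have e3 : Vt j + ∑ k ∈ Finset.univ.erase j, Vt k = 0 := by
      rw [Finset.add_sum_erase _ Vt (Finset.mem_univ j)]; exact hVtsum
    have e2 : Vt lv + ∑ k ∈ (Finset.univ.erase j).erase lv, Vt k
        = ∑ k ∈ Finset.univ.erase j, Vt k := Finset.add_sum_erase _ Vt hlvmem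
    have e4 : ∑ k ∈ (Finset.univ.erase j).erase lv, Vt k = - Vt j - Vt lv := by
      have h5 : ∑ k ∈ Finset.univ.erase j, Vt k = - Vt j :=
        eq_neg_of_add_eq_zero_right e3
      have h6 := eq_sub_of_add_eq' e2
      rw [h6, h5]
    rw [e1, e4, hs, hA]
    abel
  · -- norms
    have hUnorm : ∀ i : Fin (n + 2), ‖U i‖ = y i := by
      intro i
      induction i using Fin.lastCases with
      | last =>
        rw [← hlastF, hUlast, hB'norm, hBnorm, hylast]
      | cast k =>
        rw [hUcast k]
        by_cases hk : k = j
        · subst hk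
          rw [hU₀j, hsB'norm, show s - B = Vt k from by rw [hs]; abel,
            hVtnorm k, hz'ne k hjlv]
        · by_cases hk2 : k = lv
          · subst hk2
            rw [hU₀lv, hAnorm, ← hnF, hynF]
          · rw [hU₀other k hk hk2, hVtnorm k, hz'ne k hk2]
    intro k
    rw [hUnorm (σ.symm k)]
    simp only [hy]
    rw [Equiv.apply_symm_apply]


lemma pair_strict {m : ℕ} (hm4 : 4 ≤ m) (z : Fin m → ℝ) (hpos : ∀ k, 0 < z k)
    (i₀ j₀ : Fin m) (hij : i₀ ≠ j₀) (hi : ∀ k, z i₀ ≤ z k) (hj : ∀ k, k ≠ i₀ → z j₀ ≤ z k)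
    (hor : 5 ≤ m ∨ ∃ k, z k ≠ z i₀) : 2 * (z i₀ + z j₀) < ∑ i, z i := by
  haveI : NeZero m := ⟨by omega⟩
  set T := (Finset.univ.erase i₀).erase j₀ with hT
  have hjmem : j₀ ∈ Finset.univ.erase i₀ :=
    Finset.mem_erase.mpr ⟨Ne.symm hij, Finset.mem_univ _⟩
  have hsplit : ∑ i, z i = z i₀ + (z j₀ + ∑ k ∈ T, z k) := by
    rw [hT, Finset.add_sum_erase _ z hjmem, Finset.add_sum_erase _ z (Finset.mem_univ i₀)]
  have hTne : ∀ k ∈ T, k ≠ i₀ := by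
    intro k hk
    exact (Finset.mem_erase.mp (Finset.mem_erase.mp hk).2).1
  have hTbound : ∀ k ∈ T, z j₀ ≤ z k := fun k hk => hj k (hTne k hk)
  have hTcard : T.card = m - 2 := by
    rw [hT, Finset.card_erase_of_mem hjmem, Finset.card_erase_of_mem (Finset.mem_univ i₀),
      Finset.card_univ, Fintype.card_fin]
    omega
  have hii : z i₀ ≤ z j₀ := hi j₀
  have hjpos : 0 < z j₀ := hpos j₀
  have hmain : z i₀ + z j₀ < ∑ k ∈ T, z k := by
    rcases hor with h5 | ⟨k, hk⟩
    · have h1 : T.card • z j₀ ≤ ∑ k ∈ T, z k := Finset.card_nsmul_le_sum T z (z j₀) hTbound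
      rw [nsmul_eq_mul] at h1
      have h2 : 3 ≤ T.card := by omega
      have h3 : (3 : ℝ) ≤ (T.card : ℝ) := by exact_mod_cast h2
      nlinarith
    · have hik : z i₀ < z k := lt_of_le_of_ne (hi k) (Ne.symm hk)
      by_cases hkj : k = j₀
      · have hik' : z i₀ < z j₀ := by rw [hkj] at hik; exact hik
        have h1 : T.card • z j₀ ≤ ∑ k ∈ T, z k := Finset.card_nsmul_le_sum T z (z j₀) hTbound
        rw [nsmul_eq_mul] at h1
        have h2 : 2 ≤ T.card := by omega
        have h3 : (2 : ℝ) ≤ (T.card : ℝ) := by exact_mod_cast h2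
        nlinarith
      · have hki : k ≠ i₀ := by
          intro h; rw [h] at hk; exact hk rfl
        have hkT : k ∈ T := by
          rw [hT]
          exact Finset.mem_erase.mpr ⟨hkj, Finset.mem_erase.mpr ⟨hki, Finset.mem_univ _⟩⟩
        have hsT : ∑ i ∈ T, z i = z k + ∑ i ∈ T.erase k, z i :=
          (Finset.add_sum_erase _ z hkT).symm
        have hcard2 : 0 < (T.erase k).card := by
          rw [Finset.card_erase_of_mem hkT]
          omega
        obtain ⟨b, hb⟩ := Finset.card_pos.mp hcard2
        have hbz : z j₀ ≤ z b := hTbound b (Finset.mem_of_mem_erase hb)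
        have hble : z b ≤ ∑ i ∈ T.erase k, z i :=
          Finset.single_le_sum (fun i _ => (hpos i).le) hb
        linarith
  linarith [hsplit]

theorem key (n : ℕ) (hn : 2 ≤ n) :
    ∀ (F : Type) [NormedAddCommGroup F] [InnerProductSpace ℝ F],
    finrank ℝ F = n → ∀ z : Fin (n + 1) → ℝ, (∀ k, 0 < z k) →
    (∀ k, 2 * z k < ∑ i, z i) →
    ∃ Z : Fin (n + 1) → F, span ℝ (range Z) = ⊤ ∧ (∑ i, Z i) = 0 ∧ ∀ k, ‖Z k‖ = z k := by
  induction n, hn using Nat.le_induction with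
  | base =>
    intro F _ _ hF z hpos hineq
    obtain ⟨v, h1, h2, h3⟩ := triangle_euclidean z hpos hineq
    obtain ⟨Z, g1, g2, g3⟩ := transport (by norm_num) hF v h1 h2
    exact ⟨Z, g1, g2, fun k => (g3 k).trans (h3 k)⟩
  | succ n hn IH =>
    intro F _ _ hF z hpos hineq
    obtain ⟨i₀, -, hi₀⟩ := Finset.exists_min_image Finset.univ z ⟨0, Finset.mem_univ 0⟩
    have hcard : 1 < Fintype.card (Fin (n + 2)) := by
      rw [Fintype.card_fin]; omega
    obtain ⟨j₀', hj₀'⟩ := Fintype.exists_ne_of_one_lt_card hcard i₀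
    obtain ⟨j₀, hj₀mem, hj₀⟩ := Finset.exists_min_image (Finset.univ.erase i₀) z
      ⟨j₀', Finset.mem_erase.mpr ⟨hj₀', Finset.mem_univ _⟩⟩
    have hij : i₀ ≠ j₀ := Ne.symm (Finset.mem_erase.mp hj₀mem).1
    have hi₀min : ∀ k, z i₀ ≤ z k := fun k => hi₀ k (Finset.mem_univ k)
    have hj₀min : ∀ k, k ≠ i₀ → z j₀ ≤ z k := fun k hk =>
      hj₀ k (Finset.mem_erase.mpr ⟨hk, Finset.mem_univ k⟩)
    by_cases hall : ∀ k, z k = z i₀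
    · rcases Nat.lt_or_ge n 3 with h2 | h3
      · have hn2 : n = 2 := by omega
        subst hn2
        obtain ⟨v, h1, h2', h3'⟩ := tetra_euclidean (z i₀) (hpos i₀)
        obtain ⟨Z, g1, g2, g3⟩ := transport (by norm_num) hF v h1 h2'
        exact ⟨Z, g1, g2, fun k => by rw [g3 k, h3' k, ← hall k]⟩
      · have hpair : 2 * (z i₀ + z j₀) < ∑ i, z i :=
          pair_strict (by omega) z hpos i₀ j₀ hij hi₀min hj₀min (Or.inl (by omega))
        exact step n hn hF (fun W hW => IH W hW) z hpos hineq i₀ j₀ hij hpair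
    · push_neg at hall
      have hpair : 2 * (z i₀ + z j₀) < ∑ i, z i :=
        pair_strict (by omega) z hpos i₀ j₀ hij hi₀min hj₀min (Or.inr hall)
      exact step n hn hF (fun W hW => IH W hW) z hpos hineq i₀ j₀ hij hpair

theorem simplex_inequalities_sufficient (n : ℕ) (hn : 2 ≤ n)
    (z : Fin (n + 1) → ℝ) (hpos : ∀ k, 0 < z k)
    (hineq : ∀ k, 2 * z k < ∑ i, z i) :
    ∃ Z : Fin (n + 1) → EuclideanSpace ℝ (Fin n),
      Submodule.span ℝ (Set.range Z) = ⊤ ∧ (∑ i, Z i) = 0 ∧ ∀ k, ‖Z k‖ = z k :=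
  key n hn (EuclideanSpace ℝ (Fin n)) finrank_euclideanSpace_fin z hpos hineq
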